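/- Let ψ = φ^⟨-1⟩ be the compositional inverse of φ, and let B be an upper triangular matrix satisfying A·B = B·A = I. Then for every nonnegative integer s and all 1 ≤ k ≤ n, [B^s]_{k,n} = (a_k/a_n)·B_{n,k}(ψ^⟨s⟩), where B_{n,k}(F) denotes the partial Bell polynomial of a power series F with F(0) = 0, defined by B_{n,k}(F) = (n!/k!) times the coefficient of t^n in F(t)^k. -/

import Mathlib

open PowerSeries Finset

noncomputable section

/-- Product of two infinite matrices of complex numbers (indexed by positive integers,
upper triangular): `[A·B]_{k,n} = ∑_{j=k}^{n} [A]_{k,j}·[B]_{j,n}`. -/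
def triMul (A B : ℕ → ℕ → ℂ) : ℕ → ℕ → ℂ :=
  fun k n => ∑ j ∈ Finset.Icc k n, A k j * B j n

/-- The identity matrix. -/
def triId : ℕ → ℕ → ℂ := fun k n => if k = n then 1 else 0

/-- Powers of a matrix: `A^0 = I`, `A^{s+1} = A^s · A`. -/
def triPow (A : ℕ → ℕ → ℂ) : ℕ → ℕ → ℕ → ℂ
  | 0 => triId
  | s + 1 => triMul (triPow A s) A

/-- Composition `F ∘ G` of formal power series (intended for `G` with zero
constant coefficient): the coefficient of `t^n` is `∑_{j=0}^{n} F_j · [t^n](G^j)`. -/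
def psComp (F G : PowerSeries ℂ) : PowerSeries ℂ :=
  PowerSeries.mk fun n =>
    ∑ j ∈ Finset.range (n + 1), (PowerSeries.coeff (R := ℂ) j F) * (PowerSeries.coeff (R := ℂ) n (G ^ j))

/-- Iterated composition: `φ^⟨0⟩ = t`, `φ^⟨s+1⟩ = φ^⟨s⟩ ∘ φ`. -/
def iterComp (φ : PowerSeries ℂ) : ℕ → PowerSeries ℂ
  | 0 => PowerSeries.X
  | s + 1 => psComp (iterComp φ s) φ

/-- The partial Bell polynomial of a power series `F` with `F(0) = 0`:
`B_{n,k}(F) = (n!/k!)·[t^n](F(t)^k)`. -/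
def bellPartial (F : PowerSeries ℂ) (n k : ℕ) : ℂ :=
  (n.factorial : ℂ) / (k.factorial : ℂ) * PowerSeries.coeff (R := ℂ) n (F ^ k)

lemma coeff_pow_eq_zero' {G : PowerSeries ℂ} (hG : constantCoeff (R := ℂ) G = 0)
    {n j : ℕ} (h : n < j) : PowerSeries.coeff (R := ℂ) n (G ^ j) = 0 := by
  have hdvd : (PowerSeries.X : PowerSeries ℂ) ^ j ∣ G ^ j :=
    pow_dvd_pow_of_dvd (PowerSeries.X_dvd_iff.mpr hG) j
  exact (PowerSeries.X_pow_dvd_iff.mp hdvd) n h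

lemma sum_Icc_comm' (k n : ℕ) (f : ℕ → ℕ → ℂ) :
    ∑ j ∈ Icc k n, ∑ i ∈ Icc j n, f j i = ∑ i ∈ Icc k n, ∑ j ∈ Icc k i, f j i := by
  have h1 : ∀ j ∈ Icc k n, ∑ i ∈ Icc j n, f j i
      = ∑ i ∈ Icc k n, if j ≤ i then f j i else 0 := by
    intro j hj
    simp only [mem_Icc] at hj
    rw [← Finset.sum_subset (Finset.Icc_subset_Icc_left hj.1)]
    · exact Finset.sum_congr rfl fun i hi => by
        simp only [mem_Icc] at hi; rw [if_pos hi.1]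
    · intro i hi hni
      simp only [mem_Icc] at hi hni
      rw [if_neg]; omega
  have h2 : ∀ i ∈ Icc k n, ∑ j ∈ Icc k i, f j i
      = ∑ j ∈ Icc k n, if j ≤ i then f j i else 0 := by
    intro i hi
    simp only [mem_Icc] at hi
    rw [← Finset.sum_subset (Finset.Icc_subset_Icc_right hi.2)]
    · exact Finset.sum_congr rfl fun j hj => by
        simp only [mem_Icc] at hj; rw [if_pos hj.2]
    · intro j hj hnj
      simp only [mem_Icc] at hj hnj
      rw [if_neg]; omega
  rw [Finset.sum_congr rfl h1, Finset.sum_congr rfl h2, Finset.sum_comm]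

lemma psComp_coeff (F G : PowerSeries ℂ) (n : ℕ) :
    PowerSeries.coeff (R := ℂ) n (psComp F G)
      = ∑ j ∈ range (n+1), PowerSeries.coeff (R := ℂ) j F * PowerSeries.coeff (R := ℂ) n (G ^ j) := by
  simp [psComp]

lemma psComp_one (G : PowerSeries ℂ) : psComp 1 G = 1 := by
  ext n
  rw [psComp_coeff]
  rw [Finset.sum_eq_single 0]
  · simp
  · intro j hj hj0
    simp [PowerSeries.coeff_one, hj0]
  · simp

lemma psComp_mul {G : PowerSeries ℂ} (hG : constantCoeff (R := ℂ) G = 0) (F₁ F₂ : PowerSeries ℂ) :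
    psComp (F₁ * F₂) G = psComp F₁ G * psComp F₂ G := by
  ext n
  rw [PowerSeries.coeff_mul, psComp_coeff]
  -- RHS: extend inner sums to range (n+1)
  have hR : ∀ pq ∈ Finset.HasAntidiagonal.antidiagonal n,
      PowerSeries.coeff (R := ℂ) pq.1 (psComp F₁ G) * PowerSeries.coeff (R := ℂ) pq.2 (psComp F₂ G)
      = ∑ i ∈ range (n+1), ∑ j ∈ range (n+1),
          (PowerSeries.coeff (R := ℂ) i F₁ * PowerSeries.coeff (R := ℂ) j F₂)
            * (PowerSeries.coeff (R := ℂ) pq.1 (G ^ i) * PowerSeries.coeff (R := ℂ) pq.2 (G ^ j)) := by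
    intro pq hpq
    rw [Finset.HasAntidiagonal.mem_antidiagonal] at hpq
    rw [psComp_coeff, psComp_coeff]
    have h1 : ∑ i ∈ range (pq.1+1), PowerSeries.coeff (R := ℂ) i F₁ * PowerSeries.coeff (R := ℂ) pq.1 (G ^ i)
        = ∑ i ∈ range (n+1), PowerSeries.coeff (R := ℂ) i F₁ * PowerSeries.coeff (R := ℂ) pq.1 (G ^ i) := by
      apply Finset.sum_subset
      · apply Finset.range_subset_range.mpr; omega
      · intro i hi hni
        simp only [Finset.mem_range] at hi hni
        rw [coeff_pow_eq_zero' hG (by omega), mul_zero]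
    have h2 : ∑ j ∈ range (pq.2+1), PowerSeries.coeff (R := ℂ) j F₂ * PowerSeries.coeff (R := ℂ) pq.2 (G ^ j)
        = ∑ j ∈ range (n+1), PowerSeries.coeff (R := ℂ) j F₂ * PowerSeries.coeff (R := ℂ) pq.2 (G ^ j) := by
      apply Finset.sum_subset
      · apply Finset.range_subset_range.mpr; omega
      · intro j hj hnj
        simp only [Finset.mem_range] at hj hnj
        rw [coeff_pow_eq_zero' hG (by omega), mul_zero]
    rw [h1, h2, Finset.sum_mul_sum]
    apply Finset.sum_congr rfl; intro i _
    apply Finset.sum_congr rfl; intro j _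
    ring
  rw [Finset.sum_congr rfl hR]
  rw [Finset.sum_comm]
  -- now: ∑ i ∑ pq ∑ j ... ; push further
  have hswap : ∀ i ∈ range (n+1),
      (∑ pq ∈ Finset.HasAntidiagonal.antidiagonal n, ∑ j ∈ range (n+1),
        (PowerSeries.coeff (R := ℂ) i F₁ * PowerSeries.coeff (R := ℂ) j F₂)
          * (PowerSeries.coeff (R := ℂ) pq.1 (G ^ i) * PowerSeries.coeff (R := ℂ) pq.2 (G ^ j)))
      = ∑ j ∈ range (n+1),
          (PowerSeries.coeff (R := ℂ) i F₁ * PowerSeries.coeff (R := ℂ) j F₂)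
            * PowerSeries.coeff (R := ℂ) n (G ^ (i+j)) := by
    intro i _
    rw [Finset.sum_comm]
    apply Finset.sum_congr rfl; intro j _
    rw [pow_add, PowerSeries.coeff_mul, Finset.mul_sum]
  rw [Finset.sum_congr rfl hswap]
  -- LHS: ∑ m ∈ range (n+1), coeff m (F₁F₂) * coeff n (G^m)
  -- expand coeff m (F₁F₂) = ∑ over antidiagonal m
  have hL : ∀ m ∈ range (n+1),
      PowerSeries.coeff (R := ℂ) m (F₁ * F₂) * PowerSeries.coeff (R := ℂ) n (G ^ m)
      = ∑ ij ∈ Finset.HasAntidiagonal.antidiagonal m,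
          (PowerSeries.coeff (R := ℂ) ij.1 F₁ * PowerSeries.coeff (R := ℂ) ij.2 F₂)
            * PowerSeries.coeff (R := ℂ) n (G ^ (ij.1 + ij.2)) := by
    intro m hm
    rw [PowerSeries.coeff_mul, Finset.sum_mul]
    apply Finset.sum_congr rfl; intro ij hij
    rw [Finset.HasAntidiagonal.mem_antidiagonal] at hij
    rw [hij]
  rw [Finset.sum_congr rfl hL]
  -- both sides are sums of t ij := (f1 i * f2 j) * coeff n (G^(i+j))
  rw [← Finset.sum_product']
  rw [Finset.sum_sigma']
  rw [← Finset.sum_filter_of_ne (p := fun p : ℕ × ℕ => p.1 + p.2 ≤ n)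
    (by
      intro p _ hne
      by_contra hgt
      exact hne (by rw [coeff_pow_eq_zero' hG (by omega), mul_zero]))]
  apply Finset.sum_nbij' (fun x => (x.2.1, x.2.2)) (fun p => ⟨p.1 + p.2, p⟩)
  · intro x hx
    simp only [Finset.mem_sigma, Finset.mem_range, Finset.HasAntidiagonal.mem_antidiagonal] at hx
    simp only [Finset.mem_filter, Finset.mem_product, Finset.mem_range]
    omega
  · intro p hp
    simp only [Finset.mem_filter, Finset.mem_product, Finset.mem_range] at hp
    simp only [Finset.mem_sigma, Finset.mem_range, Finset.HasAntidiagonal.mem_antidiagonal]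
    exact ⟨by omega, trivial⟩
  · intro x hx
    simp only [Finset.mem_sigma, Finset.mem_range, Finset.HasAntidiagonal.mem_antidiagonal] at hx
    simp [hx.2]
  · intro p hp; rfl
  · intro x hx; rfl

lemma psComp_pow {G : PowerSeries ℂ} (hG : constantCoeff (R := ℂ) G = 0) (F : PowerSeries ℂ) (k : ℕ) :
    psComp (F ^ k) G = (psComp F G) ^ k := by
  induction k with
  | zero => simpa using psComp_one G
  | succ k ih => rw [pow_succ, psComp_mul hG, ih, pow_succ]

lemma psComp_constantCoeff {F G : PowerSeries ℂ} (hF : constantCoeff (R := ℂ) F = 0) :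
    constantCoeff (R := ℂ) (psComp F G) = 0 := by
  have h0 : PowerSeries.coeff (R := ℂ) 0 F = 0 := by
    rw [PowerSeries.coeff_zero_eq_constantCoeff_apply]; exact hF
  rw [← PowerSeries.coeff_zero_eq_constantCoeff_apply, psComp_coeff]
  simp [h0]

lemma iterComp_constantCoeff {ψ : PowerSeries ℂ} (hψ : constantCoeff (R := ℂ) ψ = 0) (s : ℕ) :
    constantCoeff (R := ℂ) (iterComp ψ s) = 0 := by
  induction s with
  | zero => simp [iterComp]
  | succ s ih => exact psComp_constantCoeff ih

/-- Key composition identity for weighted Bell entries. -/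
lemma bell_comp {F G : PowerSeries ℂ} (hF : constantCoeff (R := ℂ) F = 0)
    (hG : constantCoeff (R := ℂ) G = 0) {k n : ℕ} (hk : 1 ≤ k) (hkn : k ≤ n) :
    ∑ j ∈ Icc k n, bellPartial F j k * bellPartial G n j
      = bellPartial (psComp F G) n k := by
  unfold bellPartial
  rw [← psComp_pow hG, psComp_coeff]
  have hrestrict : ∑ j ∈ range (n+1), PowerSeries.coeff (R := ℂ) j (F ^ k) * PowerSeries.coeff (R := ℂ) n (G ^ j)
      = ∑ j ∈ Icc k n, PowerSeries.coeff (R := ℂ) j (F ^ k) * PowerSeries.coeff (R := ℂ) n (G ^ j) := by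
    symm
    apply Finset.sum_subset
    · intro j hj
      simp only [mem_Icc] at hj
      simp only [mem_range]; omega
    · intro j hj hnj
      simp only [mem_range] at hj
      simp only [mem_Icc] at hnj
      rcases lt_or_ge j k with h | h
      · rw [coeff_pow_eq_zero' hF h, zero_mul]
      · rw [coeff_pow_eq_zero' hG (by omega), mul_zero]
  rw [hrestrict, Finset.mul_sum]
  apply Finset.sum_congr rfl
  intro j hj
  simp only [mem_Icc] at hj
  have hjf : (j.factorial : ℂ) ≠ 0 := Nat.cast_ne_zero.mpr (Nat.factorial_ne_zero j)
  have hkf : (k.factorial : ℂ) ≠ 0 := Nat.cast_ne_zero.mpr (Nat.factorial_ne_zero k)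
  field_simp

lemma weight_cancel {ak aj an x y : ℂ} (haj : aj ≠ 0) :
    ak / aj * x * (aj / an * y) = ak / an * (x * y) := by
  have h : ak / aj * (aj / an) = ak / an := by
    rw [div_mul_div_comm, mul_comm ak aj, mul_div_mul_left _ _ haj]
  calc ak / aj * x * (aj / an * y) = ak / aj * (aj / an) * (x * y) := by ring
    _ = ak / an * (x * y) := by rw [h]

lemma bell_X (n k : ℕ) : bellPartial PowerSeries.X n k = if k = n then 1 else 0 := by
  unfold bellPartial
  rw [PowerSeries.coeff_X_pow]
  by_cases h : k = n
  · subst h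
    have hf : (k.factorial : ℂ) ≠ 0 := Nat.cast_ne_zero.mpr (Nat.factorial_ne_zero k)
    simp [div_self hf]
  · simp [h, Ne.symm h]

/-- Corollary: with `ψ = φ^⟨-1⟩` and `B` an upper triangular two-sided inverse of the
matrix `[A]_{k,n} = (a_k/a_n)·B_{n,k}(φ)`, one has `[B^s]_{k,n} = (a_k/a_n)·B_{n,k}(ψ^⟨s⟩)`. -/
theorem stmt12 (a : ℕ → ℂ) (ha : ∀ n, 1 ≤ n → a n ≠ 0)
    (φ : PowerSeries ℂ)
    (hφ0 : constantCoeff (R := ℂ) φ = 0)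
    (hφ1 : constantCoeff (R := ℂ) (derivativeFun φ) ≠ 0)
    (ψ : PowerSeries ℂ) (hψ0 : constantCoeff (R := ℂ) ψ = 0)
    (hψφ : psComp ψ φ = PowerSeries.X) (hφψ : psComp φ ψ = PowerSeries.X)
    (A B : ℕ → ℕ → ℂ)
    (hAtri : ∀ k n, n < k → A k n = 0)
    (hBtri : ∀ k n, n < k → B k n = 0)
    (hA : ∀ k n, 1 ≤ k → k ≤ n → A k n = a k / a n * bellPartial φ n k)
    (hAB : ∀ k n, 1 ≤ k → 1 ≤ n → triMul A B k n = triId k n)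
    (hBA : ∀ k n, 1 ≤ k → 1 ≤ n → triMul B A k n = triId k n)
    (s : ℕ) (k n : ℕ) (hk : 1 ≤ k) (hkn : k ≤ n) :
    triPow B s k n = a k / a n * bellPartial (iterComp ψ s) n k := by
  -- the candidate inverse
  set Bc : ℕ → ℕ → ℂ := fun j m => a j / a m * bellPartial ψ m j with hBcdef
  -- A · Bc = I on the positive block
  have hbase : ∀ k n : ℕ, 1 ≤ k → k ≤ n →
      ∑ j ∈ Icc k n, A k j * Bc j n = triId k n := by
    intro k n hk hkn
    have hterm : ∀ j ∈ Icc k n, A k j * Bc j n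
        = a k / a n * (bellPartial φ j k * bellPartial ψ n j) := by
      intro j hj
      simp only [mem_Icc] at hj
      rw [hA k j hk hj.1, hBcdef]
      have haj := ha j (le_trans hk hj.1)
      exact weight_cancel haj
    rw [Finset.sum_congr rfl hterm, ← Finset.mul_sum,
      bell_comp hφ0 hψ0 hk hkn, hφψ, bell_X]
    unfold triId
    by_cases h : k = n
    · subst h; simp [div_self (ha k hk)]
    · simp [h]
  -- B agrees with Bc on the positive block
  have hBc : ∀ k n : ℕ, 1 ≤ k → k ≤ n → B k n = Bc k n := by
    intro k n hk hkn
    have h1 : B k n = ∑ j ∈ Icc k n, B k j * triId j n := by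
      unfold triId
      rw [Finset.sum_congr rfl (fun j _ => by rw [mul_ite, mul_one, mul_zero]),
        Finset.sum_ite_eq' (Icc k n) n (fun j => B k j),
        if_pos (mem_Icc.mpr ⟨hkn, le_refl n⟩)]
    have h2 : ∑ j ∈ Icc k n, B k j * triId j n
        = ∑ j ∈ Icc k n, ∑ i ∈ Icc j n, B k j * (A j i * Bc i n) := by
      apply Finset.sum_congr rfl
      intro j hj
      simp only [mem_Icc] at hj
      rw [← hbase j n (le_trans hk hj.1) hj.2, Finset.mul_sum]
    have h3 : ∑ j ∈ Icc k n, ∑ i ∈ Icc j n, B k j * (A j i * Bc i n)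
        = ∑ i ∈ Icc k n, ∑ j ∈ Icc k i, B k j * (A j i * Bc i n) :=
      sum_Icc_comm' k n _
    have h4 : ∑ i ∈ Icc k n, ∑ j ∈ Icc k i, B k j * (A j i * Bc i n)
        = ∑ i ∈ Icc k n, triId k i * Bc i n := by
      apply Finset.sum_congr rfl
      intro i hi
      simp only [mem_Icc] at hi
      rw [← hBA k i hk (le_trans hk hi.1)]
      unfold triMul
      rw [Finset.sum_mul]
      exact Finset.sum_congr rfl fun j _ => by ring
    have h5 : ∑ i ∈ Icc k n, triId k i * Bc i n = Bc k n := by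
      unfold triId
      rw [Finset.sum_congr rfl (fun i _ => by rw [ite_mul, one_mul, zero_mul]),
        Finset.sum_ite_eq (Icc k n) k (fun i => Bc i n),
        if_pos (mem_Icc.mpr ⟨le_refl k, hkn⟩)]
    rw [h1, h2, h3, h4, h5]
  -- main induction on s
  induction s generalizing k n with
  | zero =>
    show triId k n = _
    rw [show iterComp ψ 0 = PowerSeries.X from rfl, bell_X]
    unfold triId
    by_cases h : k = n
    · subst h; simp [div_self (ha k hk)]
    · simp [h]
  | succ s ih =>
    show triMul (triPow B s) B k n = _
    unfold triMul
    have hterm : ∀ j ∈ Icc k n, triPow B s k j * B j n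
        = a k / a n * (bellPartial (iterComp ψ s) j k * bellPartial ψ n j) := by
      intro j hj
      simp only [mem_Icc] at hj
      rw [ih k j hk hj.1, hBc j n (le_trans hk hj.1) hj.2, hBcdef]
      have haj := ha j (le_trans hk hj.1)
      exact weight_cancel haj
    rw [Finset.sum_congr rfl hterm, ← Finset.mul_sum,
      bell_comp (iterComp_constantCoeff hψ0 s) hψ0 hk hkn]
    rfl
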